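/- Let D₁, ..., Dₘ be n×n diagonal matrices with nonnegative diagonal entries such that every diagonal entry of D₁D₂⋯Dₘ is ≥ 1. Then for every entrywise nonnegative n×n real matrix A, w(A)^m ≤ w(D₁A)·w(D₂A) ⋯ w(DₘA), where w denotes the numerical radius (over ℂⁿ). -/

import Mathlib

open scoped Matrix

/-- The numerical radius of an `n × n` complex matrix, viewed as an operator on `ℂⁿ`
with the Euclidean norm. -/
noncomputable def matNumRad {n : ℕ} (M : Matrix (Fin n) (Fin n) ℂ) : ℝ :=
  sSup {r : ℝ | ∃ x : EuclideanSpace ℂ (Fin n), ‖x‖ = 1 ∧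
    r = ‖(inner ℂ (Matrix.toEuclideanCLM (𝕜 := ℂ) M x) x : ℂ)‖}

open Finset in
/-- Generalized Hölder inequality for `m` nonnegative functions. -/
lemma holder_multi {ι : Type*} (s : Finset ι) (m : ℕ) (hm : m ≠ 0) (g : Fin m → ι → ℝ)
    (hg : ∀ i t, 0 ≤ g i t) :
    (∑ t ∈ s, ∏ i, g i t) ^ m ≤ ∏ i, ∑ t ∈ s, (g i t) ^ m := by
  set P : Fin m → ℝ := fun i => ∑ t ∈ s, (g i t) ^ m with hPdef
  have hPnn : ∀ i, 0 ≤ P i := fun i => Finset.sum_nonneg fun t _ => pow_nonneg (hg i t) m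
  by_cases hzero : ∃ i, P i = 0
  · obtain ⟨i0, hi0⟩ := hzero
    have hg0 : ∀ t ∈ s, g i0 t = 0 := by
      intro t ht
      have := (Finset.sum_eq_zero_iff_of_nonneg
        (fun t _ => pow_nonneg (hg i0 t) m)).1 hi0 t ht
      exact pow_eq_zero_iff hm |>.1 this
    have hsum0 : (∑ t ∈ s, ∏ i, g i t) = 0 :=
      Finset.sum_eq_zero fun t ht => Finset.prod_eq_zero (Finset.mem_univ i0) (hg0 t ht)
    rw [hsum0, zero_pow hm]
    exact Finset.prod_nonneg fun i _ => hPnn i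
  · push_neg at hzero
    have hPpos : ∀ i, 0 < P i := fun i => lt_of_le_of_ne (hPnn i) (Ne.symm (hzero i))
    have hmR : ((m : ℝ)) ≠ 0 := Nat.cast_ne_zero.2 hm
    set C : ℝ := ∏ i, (P i) ^ ((m : ℝ)⁻¹) with hCdef
    have hCpos : 0 < C :=
      Finset.prod_pos fun i _ => Real.rpow_pos_of_pos (hPpos i) _
    have key : (∑ t ∈ s, ∏ i, g i t) ≤ C := by
      rw [← div_le_one hCpos, Finset.sum_div]
      have hpt : ∀ t ∈ s, (∏ i, g i t) / C ≤ ∑ i, (m : ℝ)⁻¹ * ((g i t) ^ m / P i) := by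
        intro t _
        have := Real.geom_mean_le_arith_mean_weighted Finset.univ
          (fun _ => (m : ℝ)⁻¹) (fun i => (g i t) ^ m / P i)
          (fun i _ => by positivity) (by simp [Finset.card_univ, hmR])
          (fun i _ => div_nonneg (pow_nonneg (hg i t) m) (hPnn i))
        calc (∏ i, g i t) / C
            = ∏ i, ((g i t) ^ m / P i) ^ ((m : ℝ)⁻¹) := by
              rw [hCdef, ← Finset.prod_div_distrib]
              refine Finset.prod_congr rfl fun i _ => ?_
              rw [Real.div_rpow (pow_nonneg (hg i t) m) (hPnn i)]
              congr 1
              rw [← Real.rpow_natCast (g i t) m, ← Real.rpow_mul (hg i t),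
                mul_inv_cancel₀ hmR, Real.rpow_one]
          _ ≤ ∑ i, (m : ℝ)⁻¹ * ((g i t) ^ m / P i) := this
      calc ∑ t ∈ s, (∏ i, g i t) / C
          ≤ ∑ t ∈ s, ∑ i, (m : ℝ)⁻¹ * ((g i t) ^ m / P i) := Finset.sum_le_sum hpt
        _ = ∑ i, (m : ℝ)⁻¹ * ((∑ t ∈ s, (g i t) ^ m) / P i) := by
            rw [Finset.sum_comm]
            exact Finset.sum_congr rfl fun i _ => by rw [← Finset.mul_sum, ← Finset.sum_div]
        _ = 1 := by
            have : ∀ i ∈ (Finset.univ : Finset (Fin m)),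
                (m : ℝ)⁻¹ * ((∑ t ∈ s, (g i t) ^ m) / P i) = (m : ℝ)⁻¹ := by
              intro i _
              rw [show (∑ t ∈ s, g i t ^ m) = P i from rfl, div_self (hPpos i).ne', mul_one]
            rw [Finset.sum_congr rfl this, Finset.sum_const, Finset.card_univ,
              Fintype.card_fin, nsmul_eq_mul, mul_inv_cancel₀ hmR]
    calc (∑ t ∈ s, ∏ i, g i t) ^ m ≤ C ^ m := by
          refine pow_le_pow_left₀ ?_ key m
          exact Finset.sum_nonneg fun t _ => Finset.prod_nonneg fun i _ => hg i t
      _ = ∏ i, P i := by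
          rw [hCdef, ← Finset.prod_pow]
          refine Finset.prod_congr rfl fun i _ => ?_
          rw [← Real.rpow_natCast ((P i) ^ ((m:ℝ)⁻¹)) m, ← Real.rpow_mul (hPnn i),
            inv_mul_cancel₀ hmR, Real.rpow_one]

lemma matNumRad_nonneg {n : ℕ} (M : Matrix (Fin n) (Fin n) ℂ) : 0 ≤ matNumRad M :=
  Real.sSup_nonneg fun r hr => by obtain ⟨x, _, rfl⟩ := hr; exact norm_nonneg _

lemma matNumRad_bddAbove {n : ℕ} (M : Matrix (Fin n) (Fin n) ℂ) :
    BddAbove {r : ℝ | ∃ x : EuclideanSpace ℂ (Fin n), ‖x‖ = 1 ∧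
      r = ‖(inner ℂ (Matrix.toEuclideanCLM (𝕜 := ℂ) M x) x : ℂ)‖} := by
  refine ⟨‖Matrix.toEuclideanCLM (𝕜 := ℂ) M‖, ?_⟩
  rintro r ⟨x, hx, rfl⟩
  calc ‖(inner ℂ (Matrix.toEuclideanCLM (𝕜 := ℂ) M x) x : ℂ)‖
      ≤ ‖Matrix.toEuclideanCLM (𝕜 := ℂ) M x‖ * ‖x‖ := norm_inner_le_norm _ _
    _ ≤ ‖Matrix.toEuclideanCLM (𝕜 := ℂ) M‖ * ‖x‖ * ‖x‖ := by
        gcongr; exact (Matrix.toEuclideanCLM (𝕜 := ℂ) M).le_opNorm x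
    _ = ‖Matrix.toEuclideanCLM (𝕜 := ℂ) M‖ := by rw [hx]; ring

lemma toEuclideanCLM_apply_coord {n : ℕ} (M : Matrix (Fin n) (Fin n) ℂ)
    (z : EuclideanSpace ℂ (Fin n)) (j : Fin n) :
    (Matrix.toEuclideanCLM (𝕜 := ℂ) M z) j = ∑ k, M j k * z k := rfl

lemma inner_toEuclideanCLM {n : ℕ} (M : Matrix (Fin n) (Fin n) ℂ) (z : EuclideanSpace ℂ (Fin n)) :
    (inner ℂ (Matrix.toEuclideanCLM (𝕜 := ℂ) M z) z : ℂ)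
      = ∑ j, (starRingEnd ℂ) (∑ k, M j k * z k) * z j := by
  rw [PiLp.inner_apply]
  simp [toEuclideanCLM_apply_coord, RCLike.inner_apply]
  exact Finset.sum_congr rfl fun _ _ => mul_comm _ _

lemma norm_inner_map_le {n : ℕ} (B : Matrix (Fin n) (Fin n) ℝ) (hB : ∀ j k, 0 ≤ B j k)
    (z : EuclideanSpace ℂ (Fin n)) :
    ‖(inner ℂ (Matrix.toEuclideanCLM (𝕜 := ℂ) (B.map (fun a => (a : ℂ))) z) z : ℂ)‖
      ≤ ∑ j, ∑ k, B j k * (‖z k‖ * ‖z j‖) := by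
  rw [inner_toEuclideanCLM]
  calc ‖∑ j, (starRingEnd ℂ) (∑ k, (B.map (fun a => (a : ℂ))) j k * z k) * z j‖
      ≤ ∑ j, ‖(starRingEnd ℂ) (∑ k, (B.map (fun a => (a : ℂ))) j k * z k) * z j‖ :=
        norm_sum_le _ _
    _ ≤ ∑ j, ∑ k, B j k * (‖z k‖ * ‖z j‖) := by
        refine Finset.sum_le_sum fun j _ => ?_
        rw [norm_mul, RCLike.norm_conj]
        calc ‖∑ k, (B.map (fun a => (a : ℂ))) j k * z k‖ * ‖z j‖
            ≤ (∑ k, ‖(B.map (fun a => (a : ℂ))) j k * z k‖) * ‖z j‖ := by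
              gcongr; exact norm_sum_le _ _
          _ = ∑ k, B j k * (‖z k‖ * ‖z j‖) := by
              rw [Finset.sum_mul]
              refine Finset.sum_congr rfl fun k _ => ?_
              simp [Matrix.map_apply, norm_mul, Complex.norm_real, abs_of_nonneg (hB j k)]
              ring

lemma le_matNumRad_of_nonneg {n : ℕ} (B : Matrix (Fin n) (Fin n) ℝ) (hB : ∀ j k, 0 ≤ B j k)
    (x : Fin n → ℝ) (hx : ∀ j, 0 ≤ x j) (hx1 : ∑ j, x j ^ 2 = 1) :
    (∑ j, ∑ k, B j k * (x k * x j)) ≤ matNumRad (B.map (fun a => (a : ℂ))) := by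
  set z : EuclideanSpace ℂ (Fin n) := (WithLp.equiv 2 (Fin n → ℂ)).symm (fun j => (x j : ℂ))
    with hzdef
  have hzj : ∀ j, z j = (x j : ℂ) := fun j => rfl
  have hz1 : ‖z‖ = 1 := by
    rw [EuclideanSpace.norm_eq]
    have : ∀ j, ‖z j‖ ^ 2 = x j ^ 2 := by
      intro j; rw [hzj j, Complex.norm_real, Real.norm_eq_abs, sq_abs]
    simp only [this, hx1, Real.sqrt_one]
  have hval : (inner ℂ (Matrix.toEuclideanCLM (𝕜 := ℂ) (B.map (fun a => (a : ℂ))) z) z : ℂ)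
      = ((∑ j, ∑ k, B j k * (x k * x j) : ℝ) : ℂ) := by
    rw [inner_toEuclideanCLM]
    push_cast
    refine Finset.sum_congr rfl fun j _ => ?_
    rw [map_sum, Finset.sum_mul]
    refine Finset.sum_congr rfl fun k _ => ?_
    simp [Matrix.map_apply, hzj, ← Complex.ofReal_mul, Complex.conj_ofReal]
    ring
  have hmem : (∑ j, ∑ k, B j k * (x k * x j)) ∈
      {r : ℝ | ∃ y : EuclideanSpace ℂ (Fin n), ‖y‖ = 1 ∧
        r = ‖(inner ℂ (Matrix.toEuclideanCLM (𝕜 := ℂ) (B.map (fun a => (a : ℂ))) y) y : ℂ)‖} := by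
    refine ⟨z, hz1, ?_⟩
    rw [hval, Complex.norm_real, Real.norm_eq_abs, abs_of_nonneg]
    exact Finset.sum_nonneg fun j _ => Finset.sum_nonneg fun k _ =>
      mul_nonneg (hB j k) (mul_nonneg (hx k) (hx j))
  exact le_csSup (matNumRad_bddAbove _) hmem

/-- Finite-dimensional numerical radius analogue of Cohen's inequality: if
`D₁, …, Dₘ` are diagonal matrices with nonnegative entries whose product has all
diagonal entries `≥ 1`, then for every entrywise nonnegative matrix `A`,
`w(A)^m ≤ w(D₁A) ⋯ w(DₘA)`. -/
theorem matNumRad_pow_le_prod (n m : ℕ) (c : Fin m → Fin n → ℝ)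
    (hc : ∀ i j, 0 ≤ c i j) (hprod : ∀ j, 1 ≤ ∏ i, c i j)
    (A : Matrix (Fin n) (Fin n) ℝ) (hA : ∀ i j, 0 ≤ A i j) :
    matNumRad (A.map (fun a => (a : ℂ))) ^ m ≤
      ∏ i, matNumRad (Matrix.diagonal (fun j => (c i j : ℂ)) * A.map (fun a => (a : ℂ))) := by
  rcases Nat.eq_zero_or_pos m with rfl | hmpos
  · simp
  have hm : m ≠ 0 := hmpos.ne'
  have hmR : ((m : ℝ)) ≠ 0 := Nat.cast_ne_zero.2 hm
  have hMi : ∀ i, Matrix.diagonal (fun j => (c i j : ℂ)) * A.map (fun a => (a : ℂ))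
      = (Matrix.diagonal (c i) * A).map (fun a => (a : ℂ)) := by
    intro i
    ext j k
    rw [Matrix.map_apply, Matrix.diagonal_mul, Matrix.diagonal_mul, Matrix.map_apply,
      Complex.ofReal_mul]
  simp only [hMi]
  set w : Fin m → ℝ := fun i => matNumRad ((Matrix.diagonal (c i) * A).map (fun a => (a : ℂ)))
    with hwdef
  set W : ℝ := ∏ i, w i with hWdef
  have hW : 0 ≤ W := Finset.prod_nonneg fun i _ => matNumRad_nonneg _
  have hkey : ∀ z : EuclideanSpace ℂ (Fin n), ‖z‖ = 1 →
      ‖(inner ℂ (Matrix.toEuclideanCLM (𝕜 := ℂ) (A.map (fun a => (a : ℂ))) z) z : ℂ)‖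
        ≤ W ^ ((m : ℝ)⁻¹) := by
    intro z hz
    set x : Fin n → ℝ := fun j => ‖z j‖ with hxdef
    have hx : ∀ j, 0 ≤ x j := fun j => norm_nonneg _
    have hx2 : ∑ j, x j ^ 2 = 1 := by
      have := EuclideanSpace.norm_eq z
      rw [hz] at this
      have h1 : Real.sqrt (∑ j, ‖z j‖ ^ 2) = 1 := this.symm
      have := Real.sqrt_eq_one.mp h1
      simpa [hxdef] using this
    set S : ℝ := ∑ j, ∑ k, A j k * (x k * x j) with hSdef
    have hS : 0 ≤ S := Finset.sum_nonneg fun j _ => Finset.sum_nonneg fun k _ =>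
      mul_nonneg (hA j k) (mul_nonneg (hx k) (hx j))
    have step1 : ‖(inner ℂ (Matrix.toEuclideanCLM (𝕜 := ℂ) (A.map (fun a => (a : ℂ))) z) z : ℂ)‖
        ≤ S := norm_inner_map_le A hA z
    -- Hölder step
    set g : Fin m → Fin n × Fin n → ℝ :=
      fun i p => (c i p.1 * (A p.1 p.2 * (x p.2 * x p.1))) ^ ((m : ℝ)⁻¹) with hgdef
    have hg : ∀ i p, 0 ≤ g i p := fun i p => Real.rpow_nonneg
      (mul_nonneg (hc i p.1) (mul_nonneg (hA p.1 p.2) (mul_nonneg (hx p.2) (hx p.1)))) _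
    have hgpow : ∀ i p, (g i p) ^ m = c i p.1 * (A p.1 p.2 * (x p.2 * x p.1)) := by
      intro i p
      have h0 : 0 ≤ c i p.1 * (A p.1 p.2 * (x p.2 * x p.1)) :=
        mul_nonneg (hc i p.1) (mul_nonneg (hA p.1 p.2) (mul_nonneg (hx p.2) (hx p.1)))
      rw [hgdef, ← Real.rpow_natCast ((c i p.1 * (A p.1 p.2 * (x p.2 * x p.1))) ^ ((m:ℝ)⁻¹)) m,
        ← Real.rpow_mul h0, inv_mul_cancel₀ hmR, Real.rpow_one]
    have hgeo : ∀ p : Fin n × Fin n,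
        A p.1 p.2 * (x p.2 * x p.1) ≤ ∏ i, g i p := by
      intro p
      have ht : 0 ≤ A p.1 p.2 * (x p.2 * x p.1) :=
        mul_nonneg (hA p.1 p.2) (mul_nonneg (hx p.2) (hx p.1))
      have hprodg : ∏ i, g i p
          = (∏ i, c i p.1) ^ ((m : ℝ)⁻¹) * (A p.1 p.2 * (x p.2 * x p.1)) := by
        have : ∀ i : Fin m, g i p
            = (c i p.1) ^ ((m : ℝ)⁻¹) * ((A p.1 p.2 * (x p.2 * x p.1)) ^ ((m : ℝ)⁻¹)) := by
          intro i
          simp only [hgdef]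
          exact Real.mul_rpow (hc i p.1) ht
        rw [Finset.prod_congr rfl fun i _ => this i, Finset.prod_mul_distrib,
          Real.finset_prod_rpow _ _ (fun i _ => hc i p.1) _, Finset.prod_const,
          Finset.card_univ, Fintype.card_fin,
          ← Real.rpow_natCast ((A p.1 p.2 * (x p.2 * x p.1)) ^ ((m:ℝ)⁻¹)) m,
          ← Real.rpow_mul ht, inv_mul_cancel₀ hmR, Real.rpow_one]
      rw [hprodg]
      calc A p.1 p.2 * (x p.2 * x p.1) = 1 * (A p.1 p.2 * (x p.2 * x p.1)) := (one_mul _).symm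
        _ ≤ (∏ i, c i p.1) ^ ((m : ℝ)⁻¹) * (A p.1 p.2 * (x p.2 * x p.1)) :=
            mul_le_mul_of_nonneg_right
              (Real.one_le_rpow (hprod p.1) (by positivity)) ht
    have hSprod : S = ∑ p : Fin n × Fin n, A p.1 p.2 * (x p.2 * x p.1) := by
      rw [hSdef, ← Finset.sum_product']
      rfl
    have step2 : S ^ m ≤ ∏ i, ∑ p : Fin n × Fin n, (g i p) ^ m := by
      calc S ^ m ≤ (∑ p : Fin n × Fin n, ∏ i, g i p) ^ m := by
            refine pow_le_pow_left₀ hS ?_ m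
            rw [hSprod]
            exact Finset.sum_le_sum fun p _ => hgeo p
        _ ≤ ∏ i, ∑ p : Fin n × Fin n, (g i p) ^ m :=
            holder_multi Finset.univ m hm g (fun i t => hg i t)
    have step3 : ∀ i, (∑ p : Fin n × Fin n, (g i p) ^ m) ≤ w i := by
      intro i
      have hBnn : ∀ j k, 0 ≤ (Matrix.diagonal (c i) * A) j k := by
        intro j k
        rw [Matrix.diagonal_mul]
        exact mul_nonneg (hc i j) (hA j k)
      have := le_matNumRad_of_nonneg (Matrix.diagonal (c i) * A) hBnn x hx hx2
      refine le_trans (le_of_eq ?_) this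
      rw [← Finset.sum_product']
      refine Finset.sum_congr rfl fun p _ => ?_
      rw [hgpow, Matrix.diagonal_mul]
      ring
    have hSm : S ^ m ≤ W := by
      refine step2.trans ?_
      exact Finset.prod_le_prod
        (fun i _ => Finset.sum_nonneg fun p _ => pow_nonneg (hg i p) m)
        (fun i _ => step3 i)
    have : S ≤ W ^ ((m : ℝ)⁻¹) := by
      have h1 : S = (S ^ m) ^ ((m : ℝ)⁻¹) := by
        rw [← Real.rpow_natCast S m, ← Real.rpow_mul hS, mul_inv_cancel₀ hmR, Real.rpow_one]
      rw [h1]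
      exact Real.rpow_le_rpow (pow_nonneg hS m) hSm (by positivity)
    exact step1.trans this
  have hle : matNumRad (A.map (fun a => (a : ℂ))) ≤ W ^ ((m : ℝ)⁻¹) := by
    refine Real.sSup_le ?_ (Real.rpow_nonneg hW _)
    rintro r ⟨z, hz, rfl⟩
    exact hkey z hz
  calc matNumRad (A.map (fun a => (a : ℂ))) ^ m ≤ (W ^ ((m : ℝ)⁻¹)) ^ m :=
        pow_le_pow_left₀ (matNumRad_nonneg _) hle m
    _ = W := by
        rw [← Real.rpow_natCast (W ^ ((m:ℝ)⁻¹)) m, ← Real.rpow_mul hW,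
          inv_mul_cancel₀ hmR, Real.rpow_one]
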